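/- In H(d,q) with q ≥ 3 and i ≠ j, ground walks in different coordinates commute up to ×-homotopy: the concatenation U_i * U_j is ×-homotopic rel endpoints to U_j * U_i. -/

import Mathlib

/-- The Hamming graph `H(d,q)`: vertices are functions `Fin d → Fin q`,
adjacent iff they differ in exactly one coordinate. -/
def hammingGraph (d q : ℕ) : SimpleGraph (Fin d → Fin q) where
  Adj v w := ∃! i, v i ≠ w i
  symm := by
    constructor
    rintro v w ⟨i, hi, hu⟩
    exact ⟨i, hi.symm, fun j hj => hu j hj.symm⟩
  loopless := by
    constructor
    rintro v ⟨i, hi, -⟩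
    exact hi rfl

/-- `l` is (the list of vertices of) a walk in `G` from `a` to `b`. -/
def IsWalkOn {V : Type*} (G : SimpleGraph V) (a b : V) (l : List V) : Prop :=
  l.Chain' G.Adj ∧ l.head? = some a ∧ l.getLast? = some b

/-- Elementary moves on walks: prunes (and their inverses, anti-prunes,
via symmetry) and spider moves. -/
inductive Move {V : Type*} (G : SimpleGraph V) : List V → List V → Prop
  | prune (xs ys : List V) (u v : V) (huv : G.Adj u v) :
      Move G (xs ++ u :: v :: u :: ys) (xs ++ u :: ys)
  | spider (xs ys : List V) (u v v' w : V) (hne : v ≠ v')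
      (h1 : G.Adj u v') (h2 : G.Adj v' w) :
      Move G (xs ++ u :: v :: w :: ys) (xs ++ u :: v' :: w :: ys)

/-- ×-homotopy rel endpoints: the equivalence relation generated by prunes,
anti-prunes and spider moves. -/
def Homotopic {V : Type*} (G : SimpleGraph V) : List V → List V → Prop :=
  Relation.EqvGen (Move G)

/-- Concatenation of walks sharing an endpoint. -/
def wcat {V : Type*} (l1 l2 : List V) : List V := l1 ++ l2.tail

/-- Concatenation of a list of closed walks based at `z`. -/
def wprod {V : Type*} (z : V) (ws : List (List V)) : List V := ws.foldr wcat [z]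

/-- `u` and `v` differ exactly in coordinate `i`. -/
def DiffAt {d q : ℕ} (u v : Fin d → Fin q) (i : Fin d) : Prop :=
  u i ≠ v i ∧ ∀ j, j ≠ i → u j = v j

/-- A ground walk in coordinate `i`: a closed 3-walk at the all-zeros vertex
whose intermediate vertices are nonzero only in coordinate `i`. -/
def IsGroundWalk (d q : ℕ) [NeZero q] (i : Fin d) (l : List (Fin d → Fin q)) : Prop :=
  ∃ a b : Fin q, a ≠ 0 ∧ b ≠ 0 ∧ a ≠ b ∧
    l = [(0 : Fin d → Fin q), Function.update (0 : Fin d → Fin q) i a,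
      Function.update (0 : Fin d → Fin q) i b, 0]

/-- Number of steps of a walk in which coordinate `i` changes. -/
def changeCount {d q : ℕ} (i : Fin d) : List (Fin d → Fin q) → ℕ
  | x :: y :: rest => (if x i = y i then 0 else 1) + changeCount i (y :: rest)
  | _ => 0


section stmt8aux
variable {d q : ℕ} [NeZero q] {i j : Fin d}

def pp (i j : Fin d) (s t : Fin q) : Fin d → Fin q :=
  Function.update (Function.update (0 : Fin d → Fin q) i s) j t

lemma pp_apply (s t : Fin q) (k : Fin d) :
    pp i j s t k = if k = j then t else if k = i then s else 0 := by
  simp [pp, Function.update_apply]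

lemma pp_ne_i (hij : i ≠ j) {s s' : Fin q} (h : s ≠ s') (t t' : Fin q) :
    pp i j s t ≠ pp i j s' t' := fun hp => h (by
  have := congrFun hp i
  simpa [pp_apply, hij] using this)

lemma adj_i (hij : i ≠ j) {s s' : Fin q} (h : s ≠ s') (t : Fin q) :
    (hammingGraph d q).Adj (pp i j s t) (pp i j s' t) := by
  refine ⟨i, by simpa [pp_apply, hij] using h, fun k hk => ?_⟩
  by_contra hki
  apply hk
  simp only [pp_apply]
  split_ifs with h1 h2 <;> simp_all

lemma adj_j (hij : i ≠ j) {t t' : Fin q} (h : t ≠ t') (s : Fin q) :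
    (hammingGraph d q).Adj (pp i j s t) (pp i j s t') := by
  refine ⟨j, by simpa [pp_apply] using h, fun k hk => ?_⟩
  by_contra hkj
  apply hk
  simp only [pp_apply]
  split_ifs with h1 h2 <;> simp_all

lemma pp_zi (hij : i ≠ j) (s : Fin q) :
    pp i j s 0 = Function.update (0 : Fin d → Fin q) i s := by
  funext k
  simp only [pp_apply, Function.update_apply, Pi.zero_apply]
  split_ifs <;> simp_all

lemma pp_zj (t : Fin q) :
    pp i j (0 : Fin q) t = Function.update (0 : Fin d → Fin q) j t := by
  funext k
  simp only [pp_apply, Function.update_apply, Pi.zero_apply]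
  split_ifs <;> rfl

lemma pp_zz : pp i j (0 : Fin q) 0 = (0 : Fin d → Fin q) := by
  funext k
  simp only [pp_apply, Pi.zero_apply]
  split_ifs <;> rfl

lemma ground_comm (hij : i ≠ j) {a b c e : Fin q} (ha : a ≠ 0) (hb : b ≠ 0) (hab : a ≠ b)
    (hc : c ≠ 0) (he : e ≠ 0) (hce : c ≠ e) :
    Homotopic (hammingGraph d q)
      [pp i j 0 0, pp i j a 0, pp i j b 0, pp i j 0 0, pp i j 0 c, pp i j 0 e, pp i j 0 0]
      [pp i j 0 0, pp i j 0 c, pp i j 0 e, pp i j 0 0, pp i j a 0, pp i j b 0, pp i j 0 0] := by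
  have s1 : Homotopic (hammingGraph d q)
      [pp i j 0 0, pp i j a 0, pp i j b 0, pp i j 0 0, pp i j 0 c, pp i j 0 e, pp i j 0 0]
      [pp i j 0 0, pp i j a 0, pp i j b 0, pp i j b c, pp i j 0 c, pp i j 0 e, pp i j 0 0] :=
    Relation.EqvGen.rel _ _ (Move.spider [pp i j 0 0, pp i j a 0] [pp i j 0 e, pp i j 0 0]
      (pp i j b 0) (pp i j 0 0) (pp i j b c) (pp i j 0 c)
      (pp_ne_i hij (Ne.symm hb) _ _) (adj_j hij (Ne.symm hc) b) (adj_i hij hb c))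
  have s2 : Homotopic (hammingGraph d q)
      [pp i j 0 0, pp i j a 0, pp i j b 0, pp i j b c, pp i j 0 c, pp i j 0 e, pp i j 0 0]
      [pp i j 0 0, pp i j a 0, pp i j a c, pp i j b c, pp i j 0 c, pp i j 0 e, pp i j 0 0] :=
    Relation.EqvGen.rel _ _ (Move.spider [pp i j 0 0] [pp i j 0 c, pp i j 0 e, pp i j 0 0]
      (pp i j a 0) (pp i j b 0) (pp i j a c) (pp i j b c)
      (pp_ne_i hij (Ne.symm hab) _ _) (adj_j hij (Ne.symm hc) a) (adj_i hij hab c))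
  have s3 : Homotopic (hammingGraph d q)
      [pp i j 0 0, pp i j a 0, pp i j a c, pp i j b c, pp i j 0 c, pp i j 0 e, pp i j 0 0]
      [pp i j 0 0, pp i j 0 c, pp i j a c, pp i j b c, pp i j 0 c, pp i j 0 e, pp i j 0 0] :=
    Relation.EqvGen.rel _ _ (Move.spider [] [pp i j b c, pp i j 0 c, pp i j 0 e, pp i j 0 0]
      (pp i j 0 0) (pp i j a 0) (pp i j 0 c) (pp i j a c)
      (pp_ne_i hij ha _ _) (adj_j hij (Ne.symm hc) 0) (adj_i hij (Ne.symm ha) c))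
  have s4 : Homotopic (hammingGraph d q)
      [pp i j 0 0, pp i j 0 c, pp i j a c, pp i j b c, pp i j 0 c, pp i j 0 e, pp i j 0 0]
      [pp i j 0 0, pp i j 0 c, pp i j a c, pp i j b c, pp i j b e, pp i j 0 e, pp i j 0 0] :=
    Relation.EqvGen.rel _ _ (Move.spider [pp i j 0 0, pp i j 0 c, pp i j a c] [pp i j 0 0]
      (pp i j b c) (pp i j 0 c) (pp i j b e) (pp i j 0 e)
      (pp_ne_i hij (Ne.symm hb) _ _) (adj_j hij hce b) (adj_i hij hb e))
  have s5 : Homotopic (hammingGraph d q)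
      [pp i j 0 0, pp i j 0 c, pp i j a c, pp i j b c, pp i j b e, pp i j 0 e, pp i j 0 0]
      [pp i j 0 0, pp i j 0 c, pp i j a c, pp i j a e, pp i j b e, pp i j 0 e, pp i j 0 0] :=
    Relation.EqvGen.rel _ _ (Move.spider [pp i j 0 0, pp i j 0 c] [pp i j 0 e, pp i j 0 0]
      (pp i j a c) (pp i j b c) (pp i j a e) (pp i j b e)
      (pp_ne_i hij (Ne.symm hab) _ _) (adj_j hij hce a) (adj_i hij hab e))
  have s6 : Homotopic (hammingGraph d q)
      [pp i j 0 0, pp i j 0 c, pp i j a c, pp i j a e, pp i j b e, pp i j 0 e, pp i j 0 0]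
      [pp i j 0 0, pp i j 0 c, pp i j 0 e, pp i j a e, pp i j b e, pp i j 0 e, pp i j 0 0] :=
    Relation.EqvGen.rel _ _ (Move.spider [pp i j 0 0] [pp i j b e, pp i j 0 e, pp i j 0 0]
      (pp i j 0 c) (pp i j a c) (pp i j 0 e) (pp i j a e)
      (pp_ne_i hij ha _ _) (adj_j hij hce 0) (adj_i hij (Ne.symm ha) e))
  have s7 : Homotopic (hammingGraph d q)
      [pp i j 0 0, pp i j 0 c, pp i j 0 e, pp i j a e, pp i j b e, pp i j 0 e, pp i j 0 0]
      [pp i j 0 0, pp i j 0 c, pp i j 0 e, pp i j a e, pp i j b e, pp i j b 0, pp i j 0 0] :=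
    Relation.EqvGen.rel _ _ (Move.spider [pp i j 0 0, pp i j 0 c, pp i j 0 e, pp i j a e] []
      (pp i j b e) (pp i j 0 e) (pp i j b 0) (pp i j 0 0)
      (pp_ne_i hij (Ne.symm hb) _ _) (adj_j hij he b) (adj_i hij hb 0))
  have s8 : Homotopic (hammingGraph d q)
      [pp i j 0 0, pp i j 0 c, pp i j 0 e, pp i j a e, pp i j b e, pp i j b 0, pp i j 0 0]
      [pp i j 0 0, pp i j 0 c, pp i j 0 e, pp i j a e, pp i j a 0, pp i j b 0, pp i j 0 0] :=
    Relation.EqvGen.rel _ _ (Move.spider [pp i j 0 0, pp i j 0 c, pp i j 0 e] [pp i j 0 0]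
      (pp i j a e) (pp i j b e) (pp i j a 0) (pp i j b 0)
      (pp_ne_i hij (Ne.symm hab) _ _) (adj_j hij he a) (adj_i hij hab 0))
  have s9 : Homotopic (hammingGraph d q)
      [pp i j 0 0, pp i j 0 c, pp i j 0 e, pp i j a e, pp i j a 0, pp i j b 0, pp i j 0 0]
      [pp i j 0 0, pp i j 0 c, pp i j 0 e, pp i j 0 0, pp i j a 0, pp i j b 0, pp i j 0 0] :=
    Relation.EqvGen.rel _ _ (Move.spider [pp i j 0 0, pp i j 0 c] [pp i j b 0, pp i j 0 0]
      (pp i j 0 e) (pp i j a e) (pp i j 0 0) (pp i j a 0)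
      (pp_ne_i hij ha _ _) (adj_j hij he 0) (adj_i hij (Ne.symm ha) 0))
  exact Relation.EqvGen.trans _ _ _ s1 (Relation.EqvGen.trans _ _ _ s2
    (Relation.EqvGen.trans _ _ _ s3 (Relation.EqvGen.trans _ _ _ s4
    (Relation.EqvGen.trans _ _ _ s5 (Relation.EqvGen.trans _ _ _ s6
    (Relation.EqvGen.trans _ _ _ s7 (Relation.EqvGen.trans _ _ _ s8 s9)))))))

end stmt8aux

/-- in `H(d,q)` with `q ≥ 3` and `i ≠ j`, ground walks in different
coordinates commute up to ×-homotopy. -/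
theorem stmt8 (d q : ℕ) [NeZero q] (hq : 3 ≤ q) (i j : Fin d) (hij : i ≠ j)
    (Ui Uj : List (Fin d → Fin q))
    (hi : IsGroundWalk d q i Ui) (hj : IsGroundWalk d q j Uj) :
    Homotopic (hammingGraph d q) (wcat Ui Uj) (wcat Uj Ui) := by
  
  obtain ⟨a, b, ha, hb, hab, rfl⟩ := hi
  obtain ⟨c, e, hc, he, hce, rfl⟩ := hj
  have h := ground_comm (q := q) hij ha hb hab hc he hce
  simpa [wcat, pp_zi hij, pp_zj, pp_zz] using h
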